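/- Let k be a field of characteristic 0 and U = k⟨⟨X₀,X₁⟩⟩. Let ∂₀ be the continuous derivation of U with ∂₀(X₀) = 1 and ∂₀(X₁) = 0, and let π_Y: U → U be the k-linear projection killing all words ending in X₀ (in the sense that π_Y fixes 1 and all words ending in X₁, and sends words ending in X₀ to 0). Define sec(w) = Σ_{i≥0} ((−1)^i/i!) ∂₀^i(w) X₀^i for w in the image of π_Y. Then sec maps into ker ∂₀ and π_Y ∘ sec = id on the image of π_Y; i.e., sec is a section of π_Y restricted to ker ∂₀. -/

import Mathlib

/- STATEMENT 5: with ∂₀ the derivation ∂₀(X₀)=1, ∂₀(X₁)=0 and π_Y the projection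
killing words ending in X₀, the map sec(w) = Σᵢ ((-1)^i/i!) ∂₀^i(w) X₀^i (a finite
sum in each degree) maps the image of π_Y into ker ∂₀, and π_Y ∘ sec = id on the
image of π_Y. -/

noncomputable section

variable (k : Type) [Field k] [CharZero k]

abbrev U := FreeAlgebra k (Fin 2)

def X0 : U k := FreeAlgebra.ι k 0
def X1 : U k := FreeAlgebra.ι k 1

/-- The derivation of `k⟨⟨X₀,X₁⟩⟩` with prescribed values `g i` on the generators. -/
def derOn (g : Fin 2 → U k) : U k →ₗ[k] U k :=
  (FreeAlgebra.basisFreeMonoid k (Fin 2)).constr k fun w =>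
    ∑ i ∈ Finset.range (FreeMonoid.toList w).length,
      (((FreeMonoid.toList w).take i).map (FreeAlgebra.ι k)).prod *
        g ((FreeMonoid.toList w).getD i 0) *
        (((FreeMonoid.toList w).drop (i + 1)).map (FreeAlgebra.ι k)).prod

/-- `∂₀` : the derivation with `∂₀(X₀) = 1`, `∂₀(X₁) = 0`. -/
def d0 : U k →ₗ[k] U k := derOn k ![1, 0]

/-- `π_Y` : the projection fixing `1` and all words ending in `X₁`, and killing
words ending in `X₀`. -/
def piY : U k →ₗ[k] U k :=
  (FreeAlgebra.basisFreeMonoid k (Fin 2)).constr k fun w =>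
    if (FreeMonoid.toList w).getLast? = some 0 then 0
    else ((FreeMonoid.toList w).map (FreeAlgebra.ι k)).prod


set_option linter.unusedSectionVars false in
lemma basis_apply (w : FreeMonoid (Fin 2)) : FreeAlgebra.basisFreeMonoid k (Fin 2) w
    = ((FreeMonoid.toList w).map (FreeAlgebra.ι k)).prod := by
  rw [FreeAlgebra.basisFreeMonoid]
  simp only [Module.Basis.map_apply, Finsupp.coe_basisSingleOne, AlgEquiv.toLinearEquiv_apply]
  induction w using FreeMonoid.recOn with
  | one =>
    show FreeAlgebra.equivMonoidAlgebraFreeMonoid.symm (MonoidAlgebra.single 1 1) = _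
    rw [show (MonoidAlgebra.single (1 : FreeMonoid (Fin 2)) (1:k))
        = (1 : MonoidAlgebra k (FreeMonoid (Fin 2))) from rfl, map_one]
    rfl
  | of_mul x w ih =>
    have h : (MonoidAlgebra.single (FreeMonoid.of x * w) (1:k) : MonoidAlgebra k (FreeMonoid (Fin 2)))
        = MonoidAlgebra.single (FreeMonoid.of x) 1 * MonoidAlgebra.single w 1 := by
      rw [MonoidAlgebra.single_mul_single, one_mul]
    show FreeAlgebra.equivMonoidAlgebraFreeMonoid.symm (MonoidAlgebra.single (FreeMonoid.of x * w) 1) = _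
    rw [h, map_mul]
    have h2 : FreeAlgebra.equivMonoidAlgebraFreeMonoid.symm
        (MonoidAlgebra.single (FreeMonoid.of x) (1:k)) = FreeAlgebra.ι k x := by
      apply FreeAlgebra.equivMonoidAlgebraFreeMonoid.injective
      rw [AlgEquiv.apply_symm_apply]
      simp [FreeAlgebra.equivMonoidAlgebraFreeMonoid, MonoidAlgebra.of_apply]
    rw [h2]; erw [ih]
    show _ = (List.map (FreeAlgebra.ι k) (FreeMonoid.toList (FreeMonoid.of x * w))).prod
    rw [show FreeMonoid.toList (FreeMonoid.of x * w) = x :: FreeMonoid.toList w from rfl]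
    simp

set_option linter.unusedSectionVars false in
lemma basis_mul_X0 (w : FreeMonoid (Fin 2)) :
    FreeAlgebra.basisFreeMonoid k (Fin 2) w * X0 k
      = FreeAlgebra.basisFreeMonoid k (Fin 2) (w * FreeMonoid.of 0) := by
  rw [basis_apply, basis_apply,
    show FreeMonoid.toList (w * FreeMonoid.of 0) = FreeMonoid.toList w ++ [0] from rfl]
  simp [X0]

set_option linter.unusedSectionVars false in
lemma d0_mul_X0 (u : U k) : d0 k (u * X0 k) = d0 k u * X0 k + u := by
  have : (d0 k).comp (LinearMap.mulRight k (X0 k))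
      = (LinearMap.mulRight k (X0 k)).comp (d0 k) + LinearMap.id := by
    apply (FreeAlgebra.basisFreeMonoid k (Fin 2)).ext
    intro w
    simp only [LinearMap.comp_apply, LinearMap.add_apply, LinearMap.id_apply,
      LinearMap.mulRight_apply]
    rw [basis_mul_X0]
    rw [d0, derOn, Module.Basis.constr_basis, Module.Basis.constr_basis]
    set l := FreeMonoid.toList w with hl
    have hto : FreeMonoid.toList (w * FreeMonoid.of 0) = l ++ [0] := rfl
    rw [hto]
    rw [List.length_append, List.length_singleton, Finset.sum_range_succ]
    congr 1
    · rw [Finset.sum_mul]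
      apply Finset.sum_congr rfl
      intro i hi
      rw [Finset.mem_range] at hi
      rw [List.take_append_of_le_length (le_of_lt hi),
        List.getD_append _ _ _ _ hi,
        List.drop_append_of_le_length hi,
        List.map_append, List.prod_append]
      simp [X0, mul_assoc]
    · rw [basis_apply, hl]
      simp [List.getD]
  simpa using congrFun (congrArg (fun f => f.toFun) this) u

set_option linter.unusedSectionVars false in
lemma piY_mul_X0 (u : U k) : piY k (u * X0 k) = 0 := by
  have : (piY k).comp (LinearMap.mulRight k (X0 k)) = 0 := by
    apply (FreeAlgebra.basisFreeMonoid k (Fin 2)).ext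
    intro w
    simp only [LinearMap.comp_apply, LinearMap.mulRight_apply, LinearMap.zero_apply]
    rw [basis_mul_X0, piY, Module.Basis.constr_basis]
    rw [show FreeMonoid.toList (w * FreeMonoid.of 0) = FreeMonoid.toList w ++ [0] from rfl]
    simp
  simpa using congrFun (congrArg (fun f => f.toFun) this) u

set_option linter.unusedSectionVars false in
lemma d0_mul_X0_pow (u : U k) (i : ℕ) :
    d0 k (u * X0 k ^ (i + 1)) = d0 k u * X0 k ^ (i + 1) + ((i + 1 : ℕ) : k) • (u * X0 k ^ i) := by
  induction i generalizing u with
  | zero => simp [d0_mul_X0]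
  | succ i ih =>
    have h1 : u * X0 k ^ (i + 2) = (u * X0 k) * X0 k ^ (i + 1) := by
      rw [pow_succ', ← mul_assoc]
    rw [h1, ih (u * X0 k), d0_mul_X0, add_mul]
    rw [mul_assoc ((d0 k) u), ← pow_succ']
    rw [mul_assoc u, ← pow_succ']
    push_cast
    rw [show ((i : k) + 1 + 1) = ((i : k) + 1) + 1 by ring, add_smul, one_smul]
    module

set_option linter.unusedSectionVars false in
lemma piY_mul_X0_pow (u : U k) (i : ℕ) : piY k (u * X0 k ^ (i + 1)) = 0 := by
  have : u * X0 k ^ (i + 1) = (u * X0 k ^ i) * X0 k := by rw [pow_succ, ← mul_assoc]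
  rw [this, piY_mul_X0]

theorem sec_section_of_piY (w : U k) (hw : piY k w = w)
    (N : ℕ) (hN : ∀ i, N ≤ i → (d0 k ^ i) w = 0) :
    d0 k (∑ i ∈ Finset.range N,
        ((-1 : k) ^ i / (Nat.factorial i : k)) • ((d0 k ^ i) w * X0 k ^ i)) = 0 ∧
      piY k (∑ i ∈ Finset.range N,
        ((-1 : k) ^ i / (Nat.factorial i : k)) • ((d0 k ^ i) w * X0 k ^ i)) = w := by
  set c : ℕ → k := fun i => ((-1 : k) ^ i / (Nat.factorial i : k)) with hc
  set u : ℕ → U k := fun i => (d0 k ^ i) w with hu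
  obtain (rfl | ⟨m, rfl⟩) : N = 0 ∨ ∃ m, N = m + 1 := by
    cases N with | zero => exact Or.inl rfl | succ m => exact Or.inr ⟨m, rfl⟩
  · have hw0 : w = 0 := by simpa using hN 0 (le_refl 0)
    simp [hw0]
  have hu_succ : ∀ i, u (i + 1) = d0 k (u i) := by
    intro i; simp [hu, pow_succ', Module.End.mul_apply]
  have hscal : ∀ j : ℕ, c (j + 1) * ((j + 1 : ℕ) : k) = - c j := by
    intro j
    have h1 : ((Nat.factorial j : k)) ≠ 0 := Nat.cast_ne_zero.mpr (Nat.factorial_ne_zero j)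
    have h3 : ((j : k) + 1) ≠ 0 := Nat.cast_add_one_ne_zero j
    rw [hc]
    simp only [Nat.factorial_succ]
    push_cast
    field_simp
    ring
  have hlast : u (m + 1) = 0 := hN (m + 1) (le_refl _)
  set A : ℕ → U k := fun i => c i • (u (i + 1) * X0 k ^ i) with hA
  constructor
  · rw [map_sum]
    have hterm : ∀ i ∈ Finset.range (m + 1),
        d0 k (c i • (u i * X0 k ^ i)) =
          A i + (if h : i = 0 then 0 else - A (i - 1)) := by
      intro i _
      rw [map_smul]
      cases i with
      | zero => simp [hA, hu_succ 0]
      | succ j =>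
        rw [d0_mul_X0_pow, smul_add, smul_smul, hscal, hA, ← hu_succ]
        simp only [Nat.succ_ne_zero, dif_neg, not_false_iff, Nat.add_sub_cancel]
        rw [neg_smul]
    rw [Finset.sum_congr rfl hterm, Finset.sum_add_distrib]
    rw [Finset.sum_range_succ (fun i => A i) m]
    rw [Finset.sum_range_succ' (fun i => if h : i = 0 then (0 : U k) else - A (i - 1)) m]
    simp only [dif_pos, Nat.succ_ne_zero, dif_neg, not_false_iff, Nat.add_sub_cancel,
      add_zero]
    rw [Finset.sum_neg_distrib]
    have : A m = 0 := by simp [hA, hlast]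
    rw [this]
    abel
  · rw [map_sum]
    rw [Finset.sum_range_succ' (fun i => piY k (c i • (u i * X0 k ^ i))) m]
    have h0 : ∀ i ∈ Finset.range m, piY k (c (i + 1) • (u (i + 1) * X0 k ^ (i + 1))) = 0 := by
      intro i _
      rw [map_smul, piY_mul_X0_pow, smul_zero]
    rw [Finset.sum_congr rfl h0, Finset.sum_const_zero, zero_add]
    have : c 0 = 1 := by simp [hc]
    simp only [map_smul]
    rw [this, pow_zero, mul_one, one_smul]
    show piY k ((d0 k ^ 0) w) = w
    rw [pow_zero, Module.End.one_apply, hw]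


end
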